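/- For a densely defined closed C-symmetric operator A, the domain decomposition D(CA*C) = D(A) ⊕ N(A*CA*C + I) holds, where the orthogonal sum is with respect to the graph inner product of CA*C. Consequently, A is C-self-adjoint if and only if N(A*CA*C + I) = {0}. -/

import Mathlib

open scoped InnerProductSpace
open LinearPMap

variable {H : Type*} [NormedAddCommGroup H] [InnerProductSpace ℂ H]

/-- A conjugation on a complex inner product space: a conjugate-linear involution
satisfying `⟪Cx, Cy⟫ = ⟪y, x⟫`. -/
structure Conjugation (H : Type*) [NormedAddCommGroup H] [InnerProductSpace ℂ H] where
  toFun : H → H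
  map_add' : ∀ x y, toFun (x + y) = toFun x + toFun y
  map_smulc : ∀ (c : ℂ) (x : H), toFun (c • x) = (starRingEnd ℂ c) • toFun x
  invol : ∀ x, toFun (toFun x) = x
  inner_conj : ∀ x y, ⟪toFun x, toFun y⟫_ℂ = ⟪y, x⟫_ℂ

namespace Conjugation

instance : CoeFun (Conjugation H) fun _ => H → H := ⟨toFun⟩

lemma map_zero (C : Conjugation H) : C 0 = 0 := by
  have := C.map_smulc 0 0; simpa using this

lemma mem_of_mem_image (C : Conjugation H) {S : Set H} {x : H} (hx : x ∈ C.toFun '' S) :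
    C x ∈ S := by
  obtain ⟨t, ht, rfl⟩ := hx
  rwa [C.invol]

/-- The image `C(D)` of a subspace under a conjugation, as a subspace. -/
def conjDomain (C : Conjugation H) (D : Submodule ℂ H) : Submodule ℂ H where
  carrier := C.toFun '' (D : Set H)
  add_mem' := by
    rintro a b ⟨x, hx, rfl⟩ ⟨y, hy, rfl⟩
    exact ⟨x + y, D.add_mem hx hy, (C.map_add' x y).symm ▸ rfl⟩
  zero_mem' := ⟨0, D.zero_mem, C.map_zero⟩
  smul_mem' := by
    rintro c a ⟨x, hx, rfl⟩
    refine ⟨(starRingEnd ℂ c) • x, D.smul_mem _ hx, ?_⟩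
    rw [C.map_smulc]; simp

lemma conj_mem (C : Conjugation H) {D : Submodule ℂ H} {x : H} (hx : x ∈ C.conjDomain D) :
    C x ∈ D := C.mem_of_mem_image hx

/-- The operator `C T C` with domain `C(D(T))`. -/
noncomputable def conjOp (C : Conjugation H) (T : H →ₗ.[ℂ] H) : H →ₗ.[ℂ] H where
  domain := C.conjDomain T.domain
  toFun :=
  { toFun := fun x => C (T ⟨C ↑x, C.conj_mem x.2⟩)
    map_add' := by
      intro x y
      have h : (⟨C ↑(x + y), C.conj_mem (x + y).2⟩ : T.domain)
          = ⟨C ↑x, C.conj_mem x.2⟩ + ⟨C ↑y, C.conj_mem y.2⟩ := by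
        apply Subtype.ext; simp [C.map_add']
      try dsimp only
      rw [h, T.map_add, C.map_add']
    map_smul' := by
      intro c x
      have h : (⟨C ↑(c • x), C.conj_mem (c • x).2⟩ : T.domain)
          = (starRingEnd ℂ c) • (⟨C ↑x, C.conj_mem x.2⟩ : T.domain) := by
        apply Subtype.ext; simp [C.map_smulc]
      try dsimp only
      rw [h, T.map_smul, C.map_smulc]; simp }

/-- `A` is `C`-symmetric: `CAC ⊆ A*`. -/
noncomputable def IsCSymmetric [CompleteSpace H] (C : Conjugation H) (A : H →ₗ.[ℂ] H) : Prop :=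
  C.conjOp A ≤ A†

/-- `A` is `C`-self-adjoint: `CAC = A*`. -/
noncomputable def IsCSelfAdjoint [CompleteSpace H] (C : Conjugation H) (A : H →ₗ.[ℂ] H) : Prop :=
  C.conjOp A = A†

end Conjugation
variable [CompleteSpace H]

open scoped InnerProductSpace in
/-- The kernel `N(I + A*CA*C)`. -/
noncomputable def kerIplusAstarCAstarC (C : Conjugation H) (A : H →ₗ.[ℂ] H) : Set H :=
  {g | ∃ hg : g ∈ (C.conjOp (A†)).domain, ∃ h2 : (C.conjOp (A†)) ⟨g, hg⟩ ∈ (A†).domain,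
      g + A† ⟨(C.conjOp (A†)) ⟨g, hg⟩, h2⟩ = 0}

/-- The kernel `N(I + CA*CA*)`. -/
noncomputable def kerIplusCAstarCAstar (C : Conjugation H) (A : H →ₗ.[ℂ] H) : Set H :=
  {g | ∃ hg : g ∈ (A†).domain, ∃ h2 : A† ⟨g, hg⟩ ∈ (C.conjOp (A†)).domain,
      g + (C.conjOp (A†)) ⟨A† ⟨g, hg⟩, h2⟩ = 0}

/-- The kernel `N(I + A*B*)` where `B = CAC`. -/
noncomputable def kerIplusAstarBstar (C : Conjugation H) (A : H →ₗ.[ℂ] H) : Set H :=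
  {g | ∃ hg : g ∈ ((C.conjOp A)†).domain, ∃ h2 : (C.conjOp A)† ⟨g, hg⟩ ∈ (A†).domain,
      g + A† ⟨(C.conjOp A)† ⟨g, hg⟩, h2⟩ = 0}

open scoped InnerProductSpace in
/-- The orthogonal complement of `S` within `W`, with respect to the graph inner
product `⟪f, g⟫ + ⟪Tf, Tg⟫` of `T`. -/
def graphOrthComplIn (T : H →ₗ.[ℂ] H) (W S : Set H) : Set H :=
  {g | g ∈ W ∧ ∃ hg : g ∈ T.domain, ∀ f ∈ S, ∀ hf : f ∈ T.domain,
      ⟪f, g⟫_ℂ + ⟪T ⟨f, hf⟩, T ⟨g, hg⟩⟫_ℂ = 0}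

/-- The deficiency space `N(T* - μ)`. -/
noncomputable def defectSpace (T : H →ₗ.[ℂ] H) (μ : ℂ) : Submodule ℂ H where
  carrier := {z | ∃ hz : z ∈ (T†).domain, T† ⟨z, hz⟩ = μ • z}
  add_mem' := by
    rintro a b ⟨ha, hva⟩ ⟨hb, hvb⟩
    refine ⟨(T†).domain.add_mem ha hb, ?_⟩
    have h : (⟨a + b, (T†).domain.add_mem ha hb⟩ : (T†).domain) = ⟨a, ha⟩ + ⟨b, hb⟩ := rfl
    rw [h, LinearPMap.map_add, hva, hvb, smul_add]
  zero_mem' := by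
    refine ⟨(T†).domain.zero_mem, ?_⟩
    have h : (⟨(0 : H), (T†).domain.zero_mem⟩ : (T†).domain) = 0 := rfl
    rw [h, LinearPMap.map_zero, smul_zero]
  smul_mem' := by
    rintro c a ⟨ha, hva⟩
    refine ⟨(T†).domain.smul_mem c ha, ?_⟩
    have h : (⟨c • a, (T†).domain.smul_mem c ha⟩ : (T†).domain) = c • ⟨a, ha⟩ := rfl
    rw [h, LinearPMap.map_smul, hva, smul_comm]



section Aux

open LinearPMap

variable {H : Type*} [NormedAddCommGroup H] [InnerProductSpace ℂ H]

lemma LinearPMap.apply_congr {T : H →ₗ.[ℂ] H} {a b : T.domain} (h : (a : H) = (b : H)) :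
    T a = T b := congrArg (fun z => T z) (Subtype.ext h)

namespace Conjugation

lemma map_neg' (C : Conjugation H) (x : H) : C (-x) = -C x := by
  have := C.map_smulc (-1) x; simpa using this

lemma map_sub' (C : Conjugation H) (x y : H) : C (x - y) = C x - C y := by
  rw [sub_eq_add_neg, C.map_add', C.map_neg', sub_eq_add_neg]

lemma norm_map (C : Conjugation H) (x : H) : ‖C x‖ = ‖x‖ := by
  rw [norm_eq_sqrt_re_inner (𝕜 := ℂ) (x := C.toFun x), norm_eq_sqrt_re_inner (𝕜 := ℂ) (x := x),
    C.inner_conj x x]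

lemma isometry (C : Conjugation H) : Isometry C.toFun :=
  Isometry.of_dist_eq fun x y => by
    rw [dist_eq_norm, dist_eq_norm, ← C.map_sub', C.norm_map]

lemma continuous (C : Conjugation H) : Continuous C.toFun := C.isometry.continuous

lemma mem_conjOp_domain_iff (C : Conjugation H) {T : H →ₗ.[ℂ] H} {x : H} :
    x ∈ (C.conjOp T).domain ↔ C x ∈ T.domain :=
  ⟨fun h => C.conj_mem h, fun h => ⟨C x, h, C.invol x⟩⟩

lemma conjOp_apply (C : Conjugation H) (T : H →ₗ.[ℂ] H) (x : (C.conjOp T).domain) :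
    C.conjOp T x = C (T ⟨C ↑x, C.conj_mem x.2⟩) := rfl

lemma conjOp_mono (C : Conjugation H) {S T : H →ₗ.[ℂ] H} (h : S ≤ T) :
    C.conjOp S ≤ C.conjOp T := by
  constructor
  · intro x hx
    rw [C.mem_conjOp_domain_iff] at hx ⊢
    exact h.1 hx
  · intro x y hxy
    rw [C.conjOp_apply, C.conjOp_apply]
    exact congrArg C.toFun (h.2 (congrArg C.toFun hxy))

lemma conjOp_conjOp (C : Conjugation H) (T : H →ₗ.[ℂ] H) :
    C.conjOp (C.conjOp T) = T := by
  have hdom : (C.conjOp (C.conjOp T)).domain = T.domain := by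
    ext x
    rw [C.mem_conjOp_domain_iff, C.mem_conjOp_domain_iff, C.invol]
  apply le_antisymm
  · refine ⟨hdom.le, fun x y hxy => ?_⟩
    rw [C.conjOp_apply, C.conjOp_apply, C.invol]
    exact LinearPMap.apply_congr
      (show C.toFun (C.toFun (x : H)) = (y : H) from by rw [C.invol]; exact hxy)
  · refine ⟨hdom.ge, fun x y hxy => ?_⟩
    rw [C.conjOp_apply, C.conjOp_apply, C.invol]
    exact (LinearPMap.apply_congr
      (show C.toFun (C.toFun (y : H)) = (x : H) from by rw [C.invol]; exact hxy.symm)).symm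

end Conjugation

end Aux

section Aux2

open LinearPMap

variable {H : Type*} [NormedAddCommGroup H] [InnerProductSpace ℂ H] [CompleteSpace H]

lemma mem_adjoint_graph_iff {A : H →ₗ.[ℂ] H} (hA : Dense (A.domain : Set H)) (p : H × H) :
    p ∈ (A†).graph ↔ ∀ u : A.domain, ⟪p.2, (u : H)⟫_ℂ = ⟪p.1, A u⟫_ℂ := by
  constructor
  · intro hp u
    rw [LinearPMap.mem_graph_iff] at hp
    obtain ⟨y, hy1, hy2⟩ := hp
    rw [← hy1, ← hy2]
    exact (adjoint_isFormalAdjoint hA) y u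
  · intro hp
    have hy : p.1 ∈ (A†).domain :=
      mem_adjoint_domain_of_exists p.1 ⟨p.2, fun u => hp u⟩
    rw [LinearPMap.mem_graph_iff]
    exact ⟨⟨p.1, hy⟩, rfl, adjoint_apply_eq hA ⟨p.1, hy⟩ fun u => hp u⟩

lemma adjoint_graph_isClosed {A : H →ₗ.[ℂ] H} (hA : Dense (A.domain : Set H)) :
    IsClosed ((A†).graph : Set (H × H)) := by
  have hset : ((A†).graph : Set (H × H)) =
      ⋂ u : A.domain, {p : H × H | ⟪p.2, (u : H)⟫_ℂ - ⟪p.1, A u⟫_ℂ = 0} := by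
    ext p
    simp only [Set.mem_iInter, Set.mem_setOf_eq, sub_eq_zero, SetLike.mem_coe,
      mem_adjoint_graph_iff hA]
  rw [hset]
  exact isClosed_iInter fun u => isClosed_eq
    (((continuous_snd).inner continuous_const).sub ((continuous_fst).inner continuous_const))
    continuous_const

lemma conjOp_graph_isClosed (C : Conjugation H) {T : H →ₗ.[ℂ] H}
    (h : IsClosed (T.graph : Set (H × H))) :
    IsClosed ((C.conjOp T).graph : Set (H × H)) := by
  have hset : ((C.conjOp T).graph : Set (H × H)) =
      (fun p : H × H => (C p.1, C p.2)) ⁻¹' (T.graph : Set (H × H)) := by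
    ext p
    simp only [Set.mem_preimage, SetLike.mem_coe, LinearPMap.mem_graph_iff]
    constructor
    · rintro ⟨y, hy1, hy2⟩
      refine ⟨⟨C p.1, C.mem_conjOp_domain_iff.mp (hy1 ▸ y.2)⟩, rfl, ?_⟩
      have : C.toFun (T ⟨C.toFun ↑y, C.conj_mem y.2⟩) = p.2 := hy2
      rw [← this, C.invol]
      exact LinearPMap.apply_congr (congrArg C.toFun hy1.symm)
    · rintro ⟨y, hy1, hy2⟩
      have hd : C.toFun p.1 ∈ T.domain := hy1 ▸ y.2
      refine ⟨⟨p.1, C.mem_conjOp_domain_iff.mpr hd⟩, rfl, ?_⟩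
      show C.toFun (T ⟨C.toFun p.1, hd⟩) = p.2
      rw [LinearPMap.apply_congr
        (show ((⟨C.toFun p.1, hd⟩ : T.domain) : H) = (y : H) from hy1.symm), hy2, C.invol]
  rw [hset]
  exact h.preimage ((C.continuous.comp continuous_fst).prodMk (C.continuous.comp continuous_snd))

lemma graph_decomp {A T : H →ₗ.[ℂ] H} (hclosed : A.IsClosed)
    (hAT : A ≤ T) (h : H) (hh : h ∈ T.domain) :
    ∃ (f : H) (_ : f ∈ A.domain) (g : H) (hg : g ∈ T.domain),
      (∀ (f' : H) (hf' : f' ∈ A.domain),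
        ⟪f', g⟫_ℂ + ⟪A ⟨f', hf'⟩, T ⟨g, hg⟩⟫_ℂ = 0) ∧ h = f + g := by
  classical
  set e := WithLp.prodContinuousLinearEquiv 2 ℂ H H with he
  set KA : Submodule ℂ (WithLp 2 (H × H)) :=
    A.graph.comap ((e : WithLp 2 (H × H) →L[ℂ] H × H) : WithLp 2 (H × H) →ₗ[ℂ] H × H) with hKA
  have hKAclosed : IsClosed (KA : Set (WithLp 2 (H × H))) :=
    hclosed.preimage e.continuous
  haveI : CompleteSpace KA := hKAclosed.completeSpace_coe
  obtain ⟨y, hy, z, hz, hv⟩ := KA.exists_add_mem_mem_orthogonal (e.symm (h, T ⟨h, hh⟩))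
  have hyg : (e y) ∈ A.graph := Submodule.mem_comap.mp hy
  rw [LinearPMap.mem_graph_iff] at hyg
  obtain ⟨fy, hfy1, hfy2⟩ := hyg
  have hzg : (e z) ∈ T.graph := by
    have h2 : (e y) ∈ T.graph := by
      rw [LinearPMap.mem_graph_iff]
      exact ⟨⟨↑fy, hAT.1 fy.2⟩, hfy1, by rw [← hfy2]; exact (hAT.2 rfl).symm⟩
    have hzv : z = e.symm (h, T ⟨h, hh⟩) - y := eq_sub_of_add_eq' hv.symm
    rw [hzv, _root_.map_sub, e.apply_symm_apply]
    exact T.graph.sub_mem (T.mem_graph ⟨h, hh⟩) h2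
  rw [LinearPMap.mem_graph_iff] at hzg
  obtain ⟨gz, hgz1, hgz2⟩ := hzg
  refine ⟨↑fy, fy.2, ↑gz, gz.2, ?_, ?_⟩
  · intro f' hf'
    have hmem : e.symm (f', A ⟨f', hf'⟩) ∈ KA := by
      rw [Submodule.mem_comap]
      show e (e.symm _) ∈ A.graph
      rw [e.apply_symm_apply]
      exact A.mem_graph ⟨f', hf'⟩
    have h0 := (Submodule.mem_orthogonal KA z).mp hz _ hmem
    rw [WithLp.prod_inner_apply] at h0
    have hz1 : (↑gz : H) = (WithLp.ofLp z).1 := hgz1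
    have hz2 : (T gz : H) = (WithLp.ofLp z).2 := hgz2
    rw [← hz1, ← hz2] at h0
    exact h0
  · have h3 : (h, T ⟨h, hh⟩) = e y + e z := by
      rw [← _root_.map_add, ← hv, e.apply_symm_apply]
    rw [hfy1, hgz1]
    exact congrArg Prod.fst h3

end Aux2

theorem stmt_16 (C : Conjugation H) (A : H →ₗ.[ℂ] H) (hA : Dense (A.domain : Set H))
    (hclosed : A.IsClosed) (hsym : C.IsCSymmetric A) :
    ((A.domain : Set H) ⊆ ((C.conjOp (A†)).domain : Set H))
    ∧ kerIplusAstarCAstarC C A ⊆ ((C.conjOp (A†)).domain : Set H)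
    ∧ (∀ f ∈ (A.domain : Set H), ∀ g ∈ kerIplusAstarCAstarC C A,
        ∀ (hf : f ∈ (C.conjOp (A†)).domain) (hg : g ∈ (C.conjOp (A†)).domain),
        ⟪f, g⟫_ℂ + ⟪(C.conjOp (A†)) ⟨f, hf⟩, (C.conjOp (A†)) ⟨g, hg⟩⟫_ℂ = 0)
    ∧ (∀ h ∈ ((C.conjOp (A†)).domain : Set H),
        ∃ f ∈ (A.domain : Set H), ∃ g ∈ kerIplusAstarCAstarC C A, h = f + g)
    ∧ (C.IsCSelfAdjoint A ↔ kerIplusAstarCAstarC C A = {(0 : H)}) := by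
  have hAT : A ≤ C.conjOp (A†) := by
    have h2 := C.conjOp_mono hsym
    rwa [C.conjOp_conjOp] at h2
  -- Part 3: orthogonality
  have horth : ∀ f ∈ (A.domain : Set H), ∀ g ∈ kerIplusAstarCAstarC C A,
      ∀ (hf : f ∈ (C.conjOp (A†)).domain) (hg : g ∈ (C.conjOp (A†)).domain),
      ⟪f, g⟫_ℂ + ⟪(C.conjOp (A†)) ⟨f, hf⟩, (C.conjOp (A†)) ⟨g, hg⟩⟫_ℂ = 0 := by
    intro f hf g hgker hf' hg'
    obtain ⟨hg, h2, heq⟩ := hgker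
    rw [show (C.conjOp (A†)) ⟨g, hg'⟩ = (C.conjOp (A†)) ⟨g, hg⟩ from rfl,
        show (C.conjOp (A†)) ⟨f, hf'⟩ = A ⟨f, hf⟩ from (hAT.2 rfl).symm]
    have hform : ⟪((A†) ⟨(C.conjOp (A†)) ⟨g, hg⟩, h2⟩ : H), f⟫_ℂ
        = ⟪((C.conjOp (A†)) ⟨g, hg⟩ : H), (A ⟨f, hf⟩ : H)⟫_ℂ :=
      (LinearPMap.adjoint_isFormalAdjoint hA) ⟨(C.conjOp (A†)) ⟨g, hg⟩, h2⟩ ⟨f, hf⟩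
    have hAg : ((A†) ⟨(C.conjOp (A†)) ⟨g, hg⟩, h2⟩ : H) = -g := by
      rw [eq_neg_iff_add_eq_zero, add_comm]; exact heq
    have hkey : ⟪(A ⟨f, hf⟩ : H), ((C.conjOp (A†)) ⟨g, hg⟩ : H)⟫_ℂ = ⟪f, (-g : H)⟫_ℂ := by
      calc ⟪(A ⟨f, hf⟩ : H), ((C.conjOp (A†)) ⟨g, hg⟩ : H)⟫_ℂ
          = (starRingEnd ℂ) ⟪((C.conjOp (A†)) ⟨g, hg⟩ : H), (A ⟨f, hf⟩ : H)⟫_ℂ :=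
            (inner_conj_symm _ _).symm
        _ = (starRingEnd ℂ) ⟪((A†) ⟨(C.conjOp (A†)) ⟨g, hg⟩, h2⟩ : H), f⟫_ℂ := by rw [hform]
        _ = ⟪f, ((A†) ⟨(C.conjOp (A†)) ⟨g, hg⟩, h2⟩ : H)⟫_ℂ := inner_conj_symm _ _
        _ = ⟪f, (-g : H)⟫_ℂ := by rw [hAg]
    rw [hkey, inner_neg_right]
    ring
  -- Part 4 : decomposition
  have hdecomp : ∀ h ∈ ((C.conjOp (A†)).domain : Set H),
      ∃ f ∈ (A.domain : Set H), ∃ g ∈ kerIplusAstarCAstarC C A, h = f + g := by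
    intro h hh
    obtain ⟨f, hf, g, hg, hperp, hsum⟩ := graph_decomp hclosed hAT h hh
    refine ⟨f, hf, g, ?_, hsum⟩
    have hx0 : ∀ u : A.domain,
        ⟪(-g : H), (u : H)⟫_ℂ = ⟪((C.conjOp (A†)) ⟨g, hg⟩ : H), (A u : H)⟫_ℂ := by
      intro u
      have h0 := hperp ↑u u.2
      rw [add_comm] at h0
      have h1 := add_eq_zero_iff_eq_neg.mp h0
      calc ⟪(-g : H), (u : H)⟫_ℂ
          = -⟪g, (u : H)⟫_ℂ := by rw [inner_neg_left]
        _ = -(starRingEnd ℂ) ⟪(u : H), g⟫_ℂ := by rw [inner_conj_symm]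
        _ = (starRingEnd ℂ) (-⟪(u : H), g⟫_ℂ) := (_root_.map_neg _ _).symm
        _ = (starRingEnd ℂ) ⟪(A ⟨↑u, u.2⟩ : H), ((C.conjOp (A†)) ⟨g, hg⟩ : H)⟫_ℂ := by rw [h1]
        _ = ⟪((C.conjOp (A†)) ⟨g, hg⟩ : H), (A u : H)⟫_ℂ := inner_conj_symm _ _
    have hTg2 : (C.conjOp (A†)) ⟨g, hg⟩ ∈ (A†).domain :=
      LinearPMap.mem_adjoint_domain_of_exists _ ⟨-g, hx0⟩
    refine ⟨hg, hTg2, ?_⟩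
    have hval : ((A†) ⟨(C.conjOp (A†)) ⟨g, hg⟩, hTg2⟩ : H) = -g :=
      LinearPMap.adjoint_apply_eq hA _ hx0
    rw [hval, add_neg_cancel]
  refine ⟨hAT.1, ?_, horth, hdecomp, ?_, ?_⟩
  · rintro g ⟨hg, -, -⟩; exact hg
  -- forward direction of part 5
  · intro hsa
    have hTA : C.conjOp (A†) = A := by rw [← hsa, C.conjOp_conjOp]
    apply Set.eq_singleton_iff_unique_mem.mpr
    constructor
    · have hT0 : ((C.conjOp (A†)) ⟨(0 : H), (C.conjOp (A†)).domain.zero_mem⟩ : H) = 0 :=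
        LinearPMap.map_zero _
      have h2 : (C.conjOp (A†)) ⟨(0 : H), (C.conjOp (A†)).domain.zero_mem⟩ ∈ (A†).domain := by
        rw [hT0]; exact (A†).domain.zero_mem
      refine ⟨(C.conjOp (A†)).domain.zero_mem, h2, ?_⟩
      have hA0 : ((A†) ⟨(C.conjOp (A†)) ⟨(0 : H), (C.conjOp (A†)).domain.zero_mem⟩, h2⟩ : H)
          = 0 := by
        rw [LinearPMap.apply_congr
          (show ((⟨(C.conjOp (A†)) ⟨(0 : H), (C.conjOp (A†)).domain.zero_mem⟩, h2⟩ :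
            (A†).domain) : H) = ((0 : (A†).domain) : H) from hT0)]
        exact LinearPMap.map_zero _
      rw [hA0, add_zero]
    · rintro g hgker
      obtain ⟨hg, -, -⟩ := id hgker
      have hgA : g ∈ A.domain := hTA ▸ hg
      have h0 := horth g hgA g hgker hg hg
      rw [@inner_self_eq_norm_sq_to_K ℂ, @inner_self_eq_norm_sq_to_K ℂ] at h0
      rw [← RCLike.ofReal_pow, ← RCLike.ofReal_pow, ← RCLike.ofReal_add,
        RCLike.ofReal_eq_zero] at h0
      have h1 : ‖g‖ ^ 2 + ‖((C.conjOp (A†)) ⟨g, hg⟩ : H)‖ ^ 2 = 0 := h0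
      have hg0 : ‖g‖ = 0 := by nlinarith [sq_nonneg ‖((C.conjOp (A†)) ⟨g, hg⟩ : H)‖]
      exact norm_eq_zero.mp hg0
  -- backward direction of part 5
  · intro hker
    have hsub : ∀ h ∈ ((C.conjOp (A†)).domain : Set H), h ∈ A.domain := by
      intro h hh
      obtain ⟨f, hf, g, hgker, hsum⟩ := hdecomp h hh
      rw [hker, Set.mem_singleton_iff] at hgker
      rw [hsum, hgker, add_zero]
      exact hf
    have hle : C.conjOp (A†) ≤ A := by
      constructor
      · exact hsub
      · exact fun x y hxy => (hAT.2 hxy.symm).symm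
    have hTA : C.conjOp (A†) = A := le_antisymm hle hAT
    show C.conjOp A = A†
    calc C.conjOp A = C.conjOp (C.conjOp (A†)) := by rw [hTA]
      _ = A† := C.conjOp_conjOp _
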